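/- For every partition λ = (λ_1 ≥ λ_2 ≥ … ≥ λ_r ≥ 1) with r ≤ n, one has Q_λ = det( e(λ_i + j − i, r − i) )_{1≤i,j≤r} and also Q_λ = det( e(λ_i + j − i, j − i) )_{1≤i,j≤r}. -/

import Mathlib

open scoped LaurentSeries PowerSeries RatFunc

namespace Stmt13Aux

variable {K : Type*} [Field K]

lemma map_unit_zpow {A B : Type*} [CommRing A] [Field B] (f : A →+* B) (U : Aˣ) (z : ℤ) :
    f ↑(U ^ z) = (f ↑U) ^ z := by
  cases z with
  | ofNat k =>
      simp only [Int.ofNat_eq_coe, zpow_natCast, Units.val_pow_eq_pow_val, map_pow]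
  | negSucc k =>
      have h2 : f ↑(U ^ (k + 1))⁻¹ = (f ↑(U ^ (k + 1)))⁻¹ :=
        eq_inv_of_mul_eq_one_left (by rw [← map_mul, Units.inv_mul, map_one])
      rw [zpow_negSucc, zpow_negSucc, h2, Units.val_pow_eq_pow_val, map_pow]

lemma coeC (a : K) :
    (algebraMap (RatFunc K) K⸨X⸩) (RatFunc.C a) = HahnSeries.C a := by
  rw [← RatFunc.algebraMap_C, ← IsScalarTower.algebraMap_apply]
  simp

lemma coe_XsubC (x : K) :
    (algebraMap (RatFunc K) K⸨X⸩) (RatFunc.X - RatFunc.C x)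
      = (HahnSeries.ofPowerSeries ℤ K) (PowerSeries.X - PowerSeries.C x) := by
  rw [map_sub]
  simp only [map_sub, RatFunc.coe_X, coeC,
    HahnSeries.ofPowerSeries_X, HahnSeries.ofPowerSeries_C]

lemma coe_invXsubC {x : K} (h : x ≠ 0) :
    (algebraMap (RatFunc K) K⸨X⸩) ((RatFunc.X - RatFunc.C x)⁻¹)
      = (HahnSeries.ofPowerSeries ℤ K) (-(PowerSeries.invUnitsSub (Units.mk0 x h))) := by
  rw [map_inv₀, coe_XsubC]
  refine inv_eq_of_mul_eq_one_right ?_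
  rw [← map_mul]
  have h3 := PowerSeries.invUnitsSub_mul_sub (Units.mk0 x h)
  rw [Units.val_mk0] at h3
  have h2 : (PowerSeries.X - PowerSeries.C x) * -PowerSeries.invUnitsSub (Units.mk0 x h)
      = 1 := by linear_combination h3
  rw [h2, map_one]

lemma coe_invX :
    (algebraMap (RatFunc K) K⸨X⸩) ((RatFunc.X - RatFunc.C (0 : K))⁻¹)
      = HahnSeries.single (-1 : ℤ) (1 : K) := by
  rw [map_inv₀]
  refine inv_eq_of_mul_eq_one_right ?_
  rw [map_sub]
  simp only [RatFunc.coe_X, coeC, map_zero, HahnSeries.C_zero,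
    sub_zero]
  rw [HahnSeries.single_mul_single, add_neg_cancel, mul_one]
  rfl


lemma coeffN (β : K) {n : ℕ} (x : Fin n → K) (hx : Function.Injective x)
    (c : Fin n → K) (hc : ∀ a, x a = 0 → c a = 0) (s : ℤ) (k : ℕ)
    (hk : (k : ℤ) ≤ (n : ℤ) - 2) :
    ((algebraMap (RatFunc K) K⸨X⸩) ((1 + RatFunc.C β * RatFunc.X) ^ (-(s + 1))
          * ∏ a, RatFunc.X * RatFunc.C (1 + β * x a) * (RatFunc.X - RatFunc.C (x a))⁻¹
        - ∑ a, RatFunc.C (c a) * (RatFunc.X - RatFunc.C (x a))⁻¹)).coeff (k : ℤ)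
      = ∑ a, c a * x a ^ (-(k : ℤ) - 1) := by
  classical
  have hn2 : 2 ≤ n := by omega
  -- coefficient of a Hahn series finset sum
  have hsumco : ∀ (t : Finset (Fin n)) (F : Fin n → K⸨X⸩),
      (∑ a ∈ t, F a).coeff (k : ℤ) = ∑ a ∈ t, (F a).coeff (k : ℤ) := by
    intro t F
    induction t using Finset.cons_induction with
    | empty => simp
    | cons a t ha ih => rw [Finset.sum_cons, Finset.sum_cons, HahnSeries.coeff_add, ih]
  rw [map_sub, HahnSeries.coeff_sub]
  -- the product part has zero coefficient
  have hprod : ((algebraMap (RatFunc K) K⸨X⸩) ((1 + RatFunc.C β * RatFunc.X) ^ (-(s + 1))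
      * ∏ a, RatFunc.X * RatFunc.C (1 + β * x a)
        * (RatFunc.X - RatFunc.C (x a))⁻¹)).coeff (k : ℤ) = 0 := by
    have hU : IsUnit (1 + PowerSeries.C β * PowerSeries.X) := by
      rw [PowerSeries.isUnit_iff_constantCoeff]
      simp
    obtain ⟨U, hUeq⟩ := hU
    have hbase : (algebraMap (RatFunc K) K⸨X⸩) (1 + RatFunc.C β * RatFunc.X)
        = (HahnSeries.ofPowerSeries ℤ K) (1 + PowerSeries.C β * PowerSeries.X) := by
      simp only [map_add, map_one, map_mul,
        coeC, RatFunc.coe_X, HahnSeries.ofPowerSeries_C, HahnSeries.ofPowerSeries_X]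
    have hzpow : (algebraMap (RatFunc K) K⸨X⸩) ((1 + RatFunc.C β * RatFunc.X) ^ (-(s + 1)))
        = (HahnSeries.ofPowerSeries ℤ K) ↑(U ^ (-(s + 1))) := by
      rw [map_zpow₀, hbase, ← hUeq,
        map_unit_zpow ((HahnSeries.ofPowerSeries ℤ K) : K⟦X⟧ →+* K⸨X⸩) U (-(s + 1))]
    have hfac : ∀ a : Fin n, ∃ t : K⟦X⟧,
        (x a ≠ 0 → PowerSeries.X ∣ t) ∧
          (algebraMap (RatFunc K) K⸨X⸩) (RatFunc.X * RatFunc.C (1 + β * x a)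
            * (RatFunc.X - RatFunc.C (x a))⁻¹) = (HahnSeries.ofPowerSeries ℤ K) t := by
      intro a
      by_cases h : x a = 0
      · refine ⟨1, fun h' => absurd h h', ?_⟩
        have e1 : RatFunc.C (1 + β * x a) = 1 := by rw [h, mul_zero, add_zero, map_one]
        rw [e1, mul_one, map_mul, h, coe_invX, RatFunc.coe_X,
          HahnSeries.single_mul_single, add_neg_cancel, mul_one]
        simp
      · refine ⟨PowerSeries.X * PowerSeries.C (1 + β * x a)
            * (-(PowerSeries.invUnitsSub (Units.mk0 (x a) h))), ?_, ?_⟩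
        · intro _
          rw [mul_assoc]
          exact dvd_mul_right _ _
        · rw [map_mul, map_mul, coe_invXsubC h, map_mul, map_mul,
            RatFunc.coe_X, coeC, HahnSeries.ofPowerSeries_X,
            HahnSeries.ofPowerSeries_C]
    choose t ht1 ht2 using hfac
    have hprodeq : (algebraMap (RatFunc K) K⸨X⸩)
        ((1 + RatFunc.C β * RatFunc.X) ^ (-(s + 1))
          * ∏ a, RatFunc.X * RatFunc.C (1 + β * x a) * (RatFunc.X - RatFunc.C (x a))⁻¹)
        = (HahnSeries.ofPowerSeries ℤ K) (↑(U ^ (-(s + 1))) * ∏ a, t a) := by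
      rw [map_mul, hzpow, map_prod, map_mul, map_prod]
      congr 1
      exact Finset.prod_congr rfl fun a _ => ht2 a
    rw [hprodeq]
    have hT : n - 1 ≤ (Finset.univ.filter fun a : Fin n => x a ≠ 0).card := by
      have h1 : (Finset.univ.filter fun a : Fin n => x a = 0).card ≤ 1 := by
        refine Finset.card_le_one.mpr fun a ha b hb => ?_
        exact hx ((Finset.mem_filter.mp ha).2.trans (Finset.mem_filter.mp hb).2.symm)
      have h2 := Finset.card_filter_add_card_filter_not
        (s := (Finset.univ : Finset (Fin n))) (p := fun a => x a = 0)
      simp only [Finset.card_univ, Fintype.card_fin, not_not] at h2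
      simp only [ne_eq]
      omega
    have hdvd : (PowerSeries.X : K⟦X⟧) ^ (n - 1) ∣ ↑(U ^ (-(s + 1))) * ∏ a, t a := by
      refine Dvd.dvd.mul_left ?_ _
      calc (PowerSeries.X : K⟦X⟧) ^ (n - 1)
          ∣ (PowerSeries.X : K⟦X⟧) ^ (Finset.univ.filter fun a : Fin n => x a ≠ 0).card :=
            pow_dvd_pow _ hT
        _ = ∏ _a ∈ (Finset.univ.filter fun a : Fin n => x a ≠ 0), (PowerSeries.X : K⟦X⟧) := by
            rw [Finset.prod_const]
        _ ∣ ∏ a ∈ (Finset.univ.filter fun a : Fin n => x a ≠ 0), t a :=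
            Finset.prod_dvd_prod_of_dvd _ _
              (fun a ha => ht1 a (Finset.mem_filter.mp ha).2)
        _ ∣ ∏ a, t a :=
            Finset.prod_dvd_prod_of_subset _ _ _ (Finset.filter_subset _ _)
    have := PowerSeries.X_pow_dvd_iff.mp hdvd k (by omega)
    rw [PowerSeries.coeff_coe]
    simp only [Int.natCast_nonneg, if_neg (by omega : ¬ (k : ℤ) < 0), Int.natAbs_natCast]
    exact this
  rw [hprod, map_sum, hsumco, zero_sub, ← Finset.sum_neg_distrib]
  refine Finset.sum_congr rfl fun a _ => ?_
  by_cases h : x a = 0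
  · rw [map_mul, coeC, h, coe_invX,
      HahnSeries.C_mul_eq_smul, HahnSeries.coeff_smul, hc a h]
    simp
  · rw [map_mul, coeC, coe_invXsubC h, HahnSeries.C_mul_eq_smul,
      HahnSeries.coeff_smul, map_neg, HahnSeries.coeff_neg, PowerSeries.coeff_coe]
    simp only [if_neg (by omega : ¬ (k : ℤ) < 0), Int.natAbs_natCast,
      PowerSeries.coeff_invUnitsSub, one_divp, smul_eq_mul]
    have hz : x a ^ (-(k : ℤ) - 1) = (x a ^ (k + 1 : ℕ))⁻¹ := by
      rw [show -(k : ℤ) - 1 = -((k + 1 : ℕ) : ℤ) by push_cast; ring, zpow_neg, zpow_natCast]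
    rw [hz]
    have hval : ((Units.mk0 (x a) h ^ (k + 1))⁻¹ : Kˣ).val = (x a ^ (k + 1 : ℕ))⁻¹ := by
      rw [Units.val_inv_eq_inv_val, Units.val_pow_eq_pow_val, Units.val_mk0]
    rw [hval]
    ring


lemma prod_Ioi_swap {r : ℕ} (f : Fin r → Fin r → K) :
    ∏ i, ∏ j ∈ Finset.Ioi i, f i j = ∏ j, ∏ i ∈ Finset.Iio j, f i j :=
  Finset.prod_comm' (by
    intro i j
    simp only [Finset.mem_univ, Finset.mem_Ioi, Finset.mem_Iio, true_and, and_true])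

lemma detSum {r n : ℕ} (d : Fin r → Fin n → K) (v : Fin n → K) :
    Matrix.det (Matrix.of fun i j : Fin r => ∑ a, d i a * v a ^ (j : ℕ))
      = ∑ p ∈ Finset.univ.filter (fun p : Fin r → Fin n => Function.Injective p),
          (∏ i, d i (p i)) * ∏ i, ∏ j ∈ Finset.Ioi i, (v (p j) - v (p i)) := by
  classical
  have h1 : Matrix.det (Matrix.of fun i j : Fin r => ∑ a, d i a * v a ^ (j : ℕ))
      = ∑ p : Fin r → Fin n,
          (∏ i, d i (p i)) * ∏ i, ∏ j ∈ Finset.Ioi i, (v (p j) - v (p i)) := by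
    have e1 : Matrix.det (Matrix.of fun i j : Fin r => ∑ a, d i a * v a ^ (j : ℕ))
        = (Matrix.detRowAlternating : (Fin r → K) [⋀^Fin r]→ₗ[K] K).toMultilinearMap
            (fun i => ∑ a : Fin n, d i a • (fun j : Fin r => v a ^ (j : ℕ))) := by
      have e0 : Matrix.det (Matrix.of fun i j : Fin r => ∑ a, d i a * v a ^ (j : ℕ))
          = (Matrix.detRowAlternating : (Fin r → K) [⋀^Fin r]→ₗ[K] K).toMultilinearMap
            (fun i => (Matrix.of fun i j : Fin r => ∑ a, d i a * v a ^ (j : ℕ)) i) := rfl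
      rw [e0]
      congr 1
      funext i j
      rw [Finset.sum_apply]
      simp [Matrix.of_apply]
    rw [e1, MultilinearMap.map_sum]
    refine Finset.sum_congr rfl fun p _ => ?_
    rw [MultilinearMap.map_smul_univ]
    have e2 : (Matrix.detRowAlternating : (Fin r → K) [⋀^Fin r]→ₗ[K] K).toMultilinearMap
          (fun i => fun j : Fin r => v (p i) ^ (j : ℕ))
        = Matrix.det (Matrix.vandermonde fun i => v (p i)) := rfl
    rw [e2, Matrix.det_vandermonde, smul_eq_mul]
  rw [h1, ← Finset.sum_filter_add_sum_filter_not Finset.univ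
    (fun p : Fin r → Fin n => Function.Injective p)]
  have h2 : ∀ p ∈ Finset.univ.filter (fun p : Fin r → Fin n => ¬ Function.Injective p),
      (∏ i, d i (p i)) * ∏ i, ∏ j ∈ Finset.Ioi i, (v (p j) - v (p i)) = 0 := by
    intro p hp
    obtain ⟨i, i', heq, hne⟩ : ∃ i i', p i = p i' ∧ i ≠ i' := by
      have h3 := (Finset.mem_filter.mp hp).2
      simp only [Function.Injective, not_forall] at h3
      obtain ⟨i, i', h4, h5⟩ := h3
      exact ⟨i, i', h4, h5⟩
    rcases lt_or_gt_of_ne hne with hlt | hlt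
    · refine mul_eq_zero_of_right _ (Finset.prod_eq_zero (Finset.mem_univ i) ?_)
      refine Finset.prod_eq_zero (Finset.mem_Ioi.mpr hlt) ?_
      rw [heq, sub_self]
    · refine mul_eq_zero_of_right _ (Finset.prod_eq_zero (Finset.mem_univ i') ?_)
      refine Finset.prod_eq_zero (Finset.mem_Ioi.mpr hlt) ?_
      rw [heq, sub_self]
  rw [Finset.sum_eq_zero h2, add_zero]

lemma sumInj {r n : ℕ} (g : (Fin r → Fin n) → K) :
    ∑ p ∈ Finset.univ.filter (fun p : Fin r → Fin n => Function.Injective p), g p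
      = ∑ a : Fin r ↪ Fin n, g ⇑a := by
  classical
  refine Finset.sum_bij' (i := fun (p : Fin r → Fin n)
      (hp : p ∈ Finset.univ.filter (fun p : Fin r → Fin n => Function.Injective p)) =>
      (⟨p, (Finset.mem_filter.mp hp).2⟩ : Fin r ↪ Fin n))
    (j := fun (a : Fin r ↪ Fin n) _ => ⇑a) ?_ ?_ ?_ ?_ ?_
  · intro p hp; exact Finset.mem_univ _
  · intro a _
    exact Finset.mem_filter.mpr ⟨Finset.mem_univ _, a.injective⟩
  · intro p hp; rfl
  · intro a _; rfl
  · intro p hp; rfl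

end Stmt13Aux

/-- Corollary 11, determinant formulas, `t = 0`: for a partition
`λ = (λ₁ ≥ … ≥ λ_r ≥ 1)` with `r ≤ n`,
`Q_λ = det(e(λᵢ + j - i, r - i))_{1≤i,j≤r} = det(e(λᵢ + j - i, j - i))_{1≤i,j≤r}`,
where `Q_λ = Σ_a ∏ᵢ x_{a(i)}^{λᵢ} ∏ᵢ ∏_{j∉{a(1),…,a(i)}} x_{a(i)}/(x_{a(i)} ⊖ x_j)`
(sum over injections `a`), `e(m,s) = Σ_a (1+βx_a)^{-s} R_a x_a^{m-1}` for `m ≥ 1`,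
and for `m ≤ 0`, `e(m,s)` is the coefficient of `z^{-m}` in the Taylor expansion
at `z = 0` of `N_s(z) = (1+βz)^{-s-1} ∏_a z(1+βx_a)/(z-x_a)
 - Σ_a (1+βx_a)^{-s} R_a/(z-x_a)`.  (Indices here are 0-based: `i, j ∈ Fin r`
correspond to the paper's `i+1, j+1`, so `r - i` becomes `r - 1 - i` and
`j - i`, `λᵢ + j - i` are unchanged.) -/
theorem stmt13 {K : Type*} [Field K] (β : K) (n : ℕ) (hn : 1 ≤ n)
    (x : Fin n → K)
    (hx : Function.Injective x)
    (hxu : ∀ i, 1 + β * x i ≠ 0)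
    (ominus : K → K → K)
    (hominus : ∀ a b, ominus a b = (a - b) / (1 + β * b))
    -- `R_a = x_a ∏_{b ≠ a} x_a/(x_a ⊖ x_b)` :
    (Ra : Fin n → K)
    (hRa : ∀ a, Ra a = x a * ∏ b ∈ Finset.univ.erase a, x a / ominus (x a) (x b))
    -- the rational function `N_s(z)` :
    (N : ℤ → RatFunc K)
    (hN : ∀ s : ℤ, N s =
      (1 + RatFunc.C β * RatFunc.X) ^ (-(s + 1))
          * ∏ a, RatFunc.X * RatFunc.C (1 + β * x a) * (RatFunc.X - RatFunc.C (x a))⁻¹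
        - ∑ a, RatFunc.C ((1 + β * x a) ^ (-s) * Ra a)
            * (RatFunc.X - RatFunc.C (x a))⁻¹)
    -- the coefficients `e(m, s)` :
    (e : ℤ → ℤ → K)
    (he_pos : ∀ m s : ℤ, 1 ≤ m →
      e m s = ∑ a, (1 + β * x a) ^ (-s) * Ra a * x a ^ (m - 1))
    (he_nonpos : ∀ m s : ℤ, m ≤ 0 →
      e m s = ((N s : LaurentSeries K)).coeff (-m))
    -- the partition `λ₁ ≥ λ₂ ≥ … ≥ λ_r ≥ 1`, `r ≤ n` :
    (r : ℕ) (hr : 1 ≤ r) (hrn : r ≤ n)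
    (lam : Fin r → ℕ)
    (hanti : ∀ i j : Fin r, i ≤ j → lam j ≤ lam i)
    (hlam1 : ∀ i, 1 ≤ lam i)
    -- the generalized Hall–Littlewood function `Q_λ` :
    (Q : K)
    (hQ : Q = ∑ a : Fin r ↪ Fin n,
      (∏ i, x (a i) ^ lam i)
        * ∏ i : Fin r,
            ∏ j ∈ Finset.univ.filter (fun j : Fin n => ∀ i' : Fin r, i' ≤ i → a i' ≠ j),
              x (a i) / ominus (x (a i)) (x j)) :
    Q = Matrix.det (Matrix.of fun i j : Fin r =>
          e ((lam i : ℤ) + (j : ℤ) - (i : ℤ)) ((r : ℤ) - 1 - (i : ℤ)))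
      ∧ Q = Matrix.det (Matrix.of fun i j : Fin r =>
          e ((lam i : ℤ) + (j : ℤ) - (i : ℤ)) ((j : ℤ) - (i : ℤ))) := by
  classical
  have hRa0 : ∀ a, x a = 0 → Ra a = 0 := by
    intro a h; rw [hRa a, h, zero_mul]
  -- the uniform formula for `e`
  have key : ∀ m s : ℤ, 2 - (n : ℤ) ≤ m →
      e m s = ∑ a, (1 + β * x a) ^ (-s) * Ra a * x a ^ (m - 1) := by
    intro m s hm
    rcases le_or_gt 1 m with h1 | h1
    · exact he_pos m s h1
    · have hm0 : m ≤ 0 := by omega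
      rw [he_nonpos m s hm0, hN s]
      have hkm : (((-m).toNat : ℕ) : ℤ) = -m := Int.toNat_of_nonneg (by omega)
      have hco := Stmt13Aux.coeffN β x hx (fun a => (1 + β * x a) ^ (-s) * Ra a)
        (fun a h => by show (1 + β * x a) ^ (-s) * Ra a = 0; rw [hRa0 a h, mul_zero])
        s (-m).toNat (by omega)
      rw [hkm] at hco
      exact hco.trans (Finset.sum_congr rfl fun a _ => by
        rw [show -(-m) - 1 = m - 1 by ring])
  -- row data for the two determinants
  set d1 : Fin r → Fin n → K := fun i a =>
    (1 + β * x a) ^ (-((r : ℤ) - 1 - (i : ℤ))) * Ra a * x a ^ ((lam i : ℤ) - (i : ℤ) - 1)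
    with hd1
  set d2 : Fin r → Fin n → K := fun i a =>
    Ra a * (1 + β * x a) ^ ((i : ℤ)) * x a ^ ((lam i : ℤ) - (i : ℤ) - 1) with hd2
  set y : Fin n → K := fun a => x a * (1 + β * x a)⁻¹ with hy
  have hbound : ∀ (i j : Fin r), 2 - (n : ℤ) ≤ (lam i : ℤ) + (j : ℤ) - (i : ℤ) := by
    intro i j
    have h1 := i.isLt
    have h2 := hlam1 i
    omega
  have hxsplit : ∀ (i j : Fin r) (a : Fin n), x a ≠ 0 →
      x a ^ ((lam i : ℤ) + (j : ℤ) - (i : ℤ) - 1)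
        = x a ^ ((lam i : ℤ) - (i : ℤ) - 1) * x a ^ (j : ℕ) := by
    intro i j a hxa
    rw [← zpow_natCast (x a) (j : ℕ), ← zpow_add₀ hxa]
    congr 1
    push_cast
    ring
  -- first matrix in summed form
  have hM1 : (Matrix.of fun i j : Fin r =>
        e ((lam i : ℤ) + (j : ℤ) - (i : ℤ)) ((r : ℤ) - 1 - (i : ℤ)))
      = Matrix.of fun i j : Fin r => ∑ a, d1 i a * x a ^ (j : ℕ) := by
    funext i j
    rw [Matrix.of_apply, Matrix.of_apply, key _ _ (hbound i j)]
    refine Finset.sum_congr rfl fun a _ => ?_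
    by_cases hxa : x a = 0
    · simp [hd1, hRa0 a hxa]
    · rw [hxsplit i j a hxa]
      simp only [hd1]
      ring
  -- second matrix in summed form
  have hM2 : (Matrix.of fun i j : Fin r =>
        e ((lam i : ℤ) + (j : ℤ) - (i : ℤ)) ((j : ℤ) - (i : ℤ)))
      = Matrix.of fun i j : Fin r => ∑ a, d2 i a * y a ^ (j : ℕ) := by
    funext i j
    rw [Matrix.of_apply, Matrix.of_apply, key _ _ (hbound i j)]
    refine Finset.sum_congr rfl fun a _ => ?_
    by_cases hxa : x a = 0
    · simp [hd2, hRa0 a hxa]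
    · have h3 : (1 + β * x a) ^ (-((j : ℤ) - (i : ℤ)))
          = (1 + β * x a) ^ ((i : ℤ)) * ((1 + β * x a)⁻¹) ^ (j : ℕ) := by
        rw [show -((j : ℤ) - (i : ℤ)) = (i : ℤ) + -(((j : ℕ) : ℤ)) by push_cast; ring,
          zpow_add₀ (hxu a), zpow_neg, inv_pow]
        norm_cast
      rw [hxsplit i j a hxa, h3]
      simp only [hy, hd2, mul_pow, inv_pow, zpow_natCast]
      ring
  -- determinant expansions
  have hdet1 : Matrix.det (Matrix.of fun i j : Fin r =>
        e ((lam i : ℤ) + (j : ℤ) - (i : ℤ)) ((r : ℤ) - 1 - (i : ℤ)))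
      = ∑ p : Fin r ↪ Fin n,
          (∏ i, d1 i (p i)) * ∏ i, ∏ j ∈ Finset.Ioi i, (x (p j) - x (p i)) := by
    rw [hM1, Stmt13Aux.detSum d1 x,
      Stmt13Aux.sumInj (fun p : Fin r → Fin n =>
        (∏ i, d1 i (p i)) * ∏ i, ∏ j ∈ Finset.Ioi i, (x (p j) - x (p i)))]
  have hdet2 : Matrix.det (Matrix.of fun i j : Fin r =>
        e ((lam i : ℤ) + (j : ℤ) - (i : ℤ)) ((j : ℤ) - (i : ℤ)))
      = ∑ p : Fin r ↪ Fin n,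
          (∏ i, d2 i (p i)) * ∏ i, ∏ j ∈ Finset.Ioi i, (y (p j) - y (p i)) := by
    rw [hM2, Stmt13Aux.detSum d2 y,
      Stmt13Aux.sumInj (fun p : Fin r → Fin n =>
        (∏ i, d2 i (p i)) * ∏ i, ∏ j ∈ Finset.Ioi i, (y (p j) - y (p i)))]
  -- term-by-term identification with Q
  have term1 : ∀ p : Fin r ↪ Fin n,
      (∏ i, x (p i) ^ lam i)
          * ∏ i : Fin r,
              ∏ j ∈ Finset.univ.filter (fun j : Fin n => ∀ i' : Fin r, i' ≤ i → p i' ≠ j),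
                x (p i) / ominus (x (p i)) (x j)
        = (∏ i, d1 i (p i)) * ∏ i, ∏ j ∈ Finset.Ioi i, (x (p j) - x (p i)) := by
    intro p
    by_cases hz : ∃ i, x (p i) = 0
    · obtain ⟨i0, hi0⟩ := hz
      rw [mul_eq_zero_of_left (Finset.prod_eq_zero (Finset.mem_univ i0)
          (by rw [hi0, zero_pow (by have := hlam1 i0; omega)])) _,
        mul_eq_zero_of_left (Finset.prod_eq_zero (Finset.mem_univ i0)
          (by simp [hd1, hRa0 _ hi0])) _]
    · push_neg at hz
      set G : Fin r → Fin n → K :=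
        fun i b => x (p i) * (1 + β * x b) * (x (p i) - x b)⁻¹ with hG
      have h_omin : ∀ (i : Fin r) (b : Fin n), b ≠ p i →
          x (p i) / ominus (x (p i)) (x b) = G i b := by
        intro i b hb
        rw [hominus, div_div_eq_mul_div, div_eq_mul_inv]
      have hGne : ∀ (i : Fin r) (b : Fin n), b ≠ p i → G i b ≠ 0 := by
        intro i b hb
        simp only [hG]
        refine mul_ne_zero (mul_ne_zero (hz i) (hxu b)) (inv_ne_zero ?_)
        exact sub_ne_zero.mpr fun hh => hb (hx hh).symm
      have hFi : ∀ i : Fin r,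
          Finset.univ.filter (fun j : Fin n => ∀ i' : Fin r, i' ≤ i → p i' ≠ j)
            = (Finset.univ.erase (p i)) \ ((Finset.Iio i).image p) := by
        intro i
        ext b
        simp only [Finset.mem_filter, Finset.mem_univ, true_and, Finset.mem_sdiff,
          Finset.mem_erase, Finset.mem_image, Finset.mem_Iio, not_exists, ne_eq, not_and,
          and_true]
        constructor
        · intro h
          refine ⟨fun hb => h i le_rfl hb.symm, fun i' hi' hb => h i' hi'.le hb⟩
        · rintro ⟨h1, h2⟩ i' hi' hb
          rcases lt_or_eq_of_le hi' with h3 | h3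
          · exact h2 i' h3 hb
          · exact h1 (by rw [← h3, hb])
      have hGer : ∀ i : Fin r,
          ∏ b ∈ Finset.univ.erase (p i), G i b = Ra (p i) * (x (p i))⁻¹ := by
        intro i
        have h5 : Ra (p i) = x (p i) * ∏ b ∈ Finset.univ.erase (p i), G i b := by
          rw [hRa (p i)]
          exact congrArg _ (Finset.prod_congr rfl fun b hb =>
            h_omin i b (Finset.mem_erase.mp hb).1)
        rw [h5, mul_comm (x (p i)) _, mul_assoc, mul_inv_cancel₀ (hz i), mul_one]
      have hsub : ∀ i : Fin r, (Finset.Iio i).image ⇑p ⊆ Finset.univ.erase (p i) := by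
        intro i b hb
        obtain ⟨i', hi', rfl⟩ := Finset.mem_image.mp hb
        refine Finset.mem_erase.mpr ⟨fun hh => ?_, Finset.mem_univ _⟩
        exact absurd (p.injective hh) (Finset.mem_Iio.mp hi').ne
      have hQi : ∀ i : Fin r,
          ∏ j ∈ Finset.univ.filter (fun j : Fin n => ∀ i' : Fin r, i' ≤ i → p i' ≠ j),
              x (p i) / ominus (x (p i)) (x j)
            = (Ra (p i) * (x (p i))⁻¹)
                * (∏ i' ∈ Finset.Iio i, G i (p i'))⁻¹ := by
        intro i
        have h6 : ∏ j ∈ Finset.univ.filter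
              (fun j : Fin n => ∀ i' : Fin r, i' ≤ i → p i' ≠ j),
              x (p i) / ominus (x (p i)) (x j)
            = ∏ b ∈ (Finset.univ.erase (p i)) \ ((Finset.Iio i).image p), G i b := by
          rw [hFi i]
          refine Finset.prod_congr rfl fun b hb => ?_
          exact h_omin i b (Finset.mem_erase.mp (Finset.mem_sdiff.mp hb).1).1
        have h7 : ∏ b ∈ (Finset.Iio i).image ⇑p, G i b
            = ∏ i' ∈ Finset.Iio i, G i (p i') :=
          Finset.prod_image fun a _ b _ hab => p.injective hab
        have h8 : (∏ b ∈ (Finset.univ.erase (p i)) \ ((Finset.Iio i).image p), G i b)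
              * ∏ b ∈ (Finset.Iio i).image ⇑p, G i b
            = ∏ b ∈ Finset.univ.erase (p i), G i b := Finset.prod_sdiff (hsub i)
        have h9 : ∏ i' ∈ Finset.Iio i, G i (p i') ≠ 0 := by
          refine Finset.prod_ne_zero_iff.mpr fun i' hi' => ?_
          refine hGne i (p i') fun hh => ?_
          exact absurd (p.injective hh) (Finset.mem_Iio.mp hi').ne
        rw [h6, ← hGer i, ← h8, h7, mul_assoc, mul_inv_cancel₀ h9, mul_one]
      -- per-row algebra
      have h10 : ∀ i : Fin r,
          x (p i) ^ lam i
              * ((Ra (p i) * (x (p i))⁻¹) * (∏ i' ∈ Finset.Iio i, G i (p i'))⁻¹)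
            = d1 i (p i)
                * ((∏ i' ∈ Finset.Iio i, (1 + β * x (p i')))⁻¹
                    * (1 + β * x (p i)) ^ (r - 1 - (i : ℕ))
                  * ∏ i' ∈ Finset.Iio i, (x (p i) - x (p i'))) := by
        intro i
        have hIio : (Finset.Iio i).card = (i : ℕ) := Fin.card_Iio i
        have hinv : (∏ i' ∈ Finset.Iio i, G i (p i'))⁻¹
            = ((x (p i))⁻¹) ^ (i : ℕ)
                * ((∏ i' ∈ Finset.Iio i, (1 + β * x (p i')))⁻¹
                  * ∏ i' ∈ Finset.Iio i, (x (p i) - x (p i'))) := by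
          rw [← Finset.prod_inv_distrib]
          have hstep : ∀ i' ∈ Finset.Iio i, (G i (p i'))⁻¹
              = (x (p i))⁻¹ * ((1 + β * x (p i'))⁻¹ * (x (p i) - x (p i'))) := by
            intro i' _
            simp only [hG, mul_inv, inv_inv]
            ring
          rw [Finset.prod_congr rfl hstep, Finset.prod_mul_distrib, Finset.prod_mul_distrib,
            Finset.prod_const, hIio, Finset.prod_inv_distrib]
        have e4 : ((1 + β * x (p i))⁻¹) ^ (r - 1 - (i : ℕ))
            * (1 + β * x (p i)) ^ (r - 1 - (i : ℕ)) = 1 := by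
          rw [← mul_pow, inv_mul_cancel₀ (hxu (p i)), one_pow]
        have e1 : x (p i) ^ ((lam i : ℤ) - (i : ℤ) - 1)
            = x (p i) ^ lam i * ((x (p i))⁻¹) ^ (i : ℕ) * (x (p i))⁻¹ := by
          rw [show (lam i : ℤ) - (i : ℤ) - 1 = (lam i : ℤ) + -((((i : ℕ) + 1 : ℕ)) : ℤ) by
              push_cast; ring,
            zpow_add₀ (hz i), zpow_neg, zpow_natCast, zpow_natCast, ← inv_pow, pow_succ]
          ring
        have e2 : (1 + β * x (p i)) ^ (-((r : ℤ) - 1 - (i : ℤ)))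
            = ((1 + β * x (p i))⁻¹) ^ (r - 1 - (i : ℕ)) := by
          have h11 := i.isLt
          rw [show -((r : ℤ) - 1 - (i : ℤ)) = -(((r - 1 - (i : ℕ) : ℕ)) : ℤ) by
              push_cast [Nat.cast_sub (by omega : (i : ℕ) ≤ r - 1),
                Nat.cast_sub (by omega : 1 ≤ r)]
              ring,
            zpow_neg, zpow_natCast, ← inv_pow]
        rw [hinv]
        simp only [hd1]
        rw [e1, e2]
        linear_combination (-(Ra (p i) * (x (p i) ^ lam i * ((x (p i))⁻¹) ^ (i : ℕ)
            * (x (p i))⁻¹)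
            * ((∏ i' ∈ Finset.Iio i, (1 + β * x (p i')))⁻¹
              * ∏ i' ∈ Finset.Iio i, (x (p i) - x (p i'))))) * e4
      have h14 : ∏ i : Fin r, ∏ i' ∈ Finset.Iio i, (1 + β * x (p i'))
          = ∏ i : Fin r, (1 + β * x (p i)) ^ (r - 1 - (i : ℕ)) := by
        rw [← Stmt13Aux.prod_Ioi_swap (fun i _ => (1 + β * x (p i)))]
        exact Finset.prod_congr rfl fun i _ => by
          rw [Finset.prod_const, Fin.card_Ioi]
      have h13 : (∏ i : Fin r, (∏ i' ∈ Finset.Iio i, (1 + β * x (p i')))⁻¹)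
            * ∏ i : Fin r, (1 + β * x (p i)) ^ (r - 1 - (i : ℕ)) = 1 := by
        rw [Finset.prod_inv_distrib, h14]
        exact inv_mul_cancel₀ (Finset.prod_ne_zero_iff.mpr fun i _ =>
          pow_ne_zero _ (hxu (p i)))
      have h12 : ∏ i : Fin r, ∏ i' ∈ Finset.Iio i, (x (p i) - x (p i'))
          = ∏ i, ∏ j ∈ Finset.Ioi i, (x (p j) - x (p i)) :=
        (Stmt13Aux.prod_Ioi_swap fun i j => (x (p j) - x (p i))).symm
      calc (∏ i, x (p i) ^ lam i)
            * ∏ i : Fin r,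
                ∏ j ∈ Finset.univ.filter (fun j : Fin n => ∀ i' : Fin r, i' ≤ i → p i' ≠ j),
                  x (p i) / ominus (x (p i)) (x j)
          = ∏ i, (x (p i) ^ lam i
              * ((Ra (p i) * (x (p i))⁻¹) * (∏ i' ∈ Finset.Iio i, G i (p i'))⁻¹)) := by
            rw [← Finset.prod_mul_distrib]
            exact Finset.prod_congr rfl fun i _ => by rw [hQi i]
        _ = ∏ i, (d1 i (p i)
              * ((∏ i' ∈ Finset.Iio i, (1 + β * x (p i')))⁻¹
                  * (1 + β * x (p i)) ^ (r - 1 - (i : ℕ))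
                * ∏ i' ∈ Finset.Iio i, (x (p i) - x (p i')))) :=
            Finset.prod_congr rfl fun i _ => h10 i
        _ = (∏ i, d1 i (p i))
              * ((∏ i : Fin r, (∏ i' ∈ Finset.Iio i, (1 + β * x (p i')))⁻¹)
                  * (∏ i : Fin r, (1 + β * x (p i)) ^ (r - 1 - (i : ℕ)))
                * ∏ i : Fin r, ∏ i' ∈ Finset.Iio i, (x (p i) - x (p i'))) := by
            rw [Finset.prod_mul_distrib (f := fun i => d1 i (p i))
                (g := fun i : Fin r => (∏ i' ∈ Finset.Iio i, (1 + β * x (p i')))⁻¹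
                  * (1 + β * x (p i)) ^ (r - 1 - (i : ℕ))
                  * ∏ i' ∈ Finset.Iio i, (x (p i) - x (p i'))),
              Finset.prod_mul_distrib (f := fun i : Fin r =>
                  (∏ i' ∈ Finset.Iio i, (1 + β * x (p i')))⁻¹
                    * (1 + β * x (p i)) ^ (r - 1 - (i : ℕ)))
                (g := fun i : Fin r => ∏ i' ∈ Finset.Iio i, (x (p i) - x (p i'))),
              Finset.prod_mul_distrib (f := fun i : Fin r =>
                  (∏ i' ∈ Finset.Iio i, (1 + β * x (p i')))⁻¹)
                (g := fun i : Fin r => (1 + β * x (p i)) ^ (r - 1 - (i : ℕ)))]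
        _ = (∏ i, d1 i (p i)) * ∏ i, ∏ j ∈ Finset.Ioi i, (x (p j) - x (p i)) := by
            rw [h13, one_mul, h12]
  have term2 : ∀ p : Fin r ↪ Fin n,
      (∏ i, d2 i (p i)) * ∏ i, ∏ j ∈ Finset.Ioi i, (y (p j) - y (p i))
        = (∏ i, d1 i (p i)) * ∏ i, ∏ j ∈ Finset.Ioi i, (x (p j) - x (p i)) := by
    intro p
    by_cases hz : ∃ i, x (p i) = 0
    · obtain ⟨i0, hi0⟩ := hz
      rw [mul_eq_zero_of_left (Finset.prod_eq_zero (Finset.mem_univ i0)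
          (by simp [hd2, hRa0 _ hi0])) _,
        mul_eq_zero_of_left (Finset.prod_eq_zero (Finset.mem_univ i0)
          (by simp [hd1, hRa0 _ hi0])) _]
    · push_neg at hz
      have hd21 : ∀ i : Fin r, d2 i (p i)
          = d1 i (p i) * (1 + β * x (p i)) ^ (r - 1 : ℕ) := by
        intro i
        have h5 : (1 + β * x (p i)) ^ (((i : ℕ) : ℤ))
            = (1 + β * x (p i)) ^ (-((r : ℤ) - 1 - (i : ℤ)))
              * (1 + β * x (p i)) ^ (((r - 1 : ℕ) : ℤ)) := by
          rw [← zpow_add₀ (hxu (p i))]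
          congr 1
          have h11 := i.isLt
          push_cast [Nat.cast_sub (by omega : 1 ≤ r)]
          ring
        simp only [hd1, hd2]
        rw [show ((i : ℤ)) = (((i : ℕ) : ℤ)) from rfl, h5, zpow_natCast]
        ring
      have hyd : ∀ a b : Fin n, y a - y b
          = (x a - x b) * ((1 + β * x a)⁻¹ * (1 + β * x b)⁻¹) := by
        intro a b
        have ha := hxu a
        have hb := hxu b
        simp only [hy]
        rw [← div_eq_mul_inv, ← div_eq_mul_inv, div_sub_div _ _ ha hb]
        field_simp
        ring
      have hsw : ∏ i : Fin r, ∏ j ∈ Finset.Ioi i, (1 + β * x (p j))⁻¹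
          = ∏ i : Fin r, ((1 + β * x (p i))⁻¹) ^ (i : ℕ) := by
        rw [Stmt13Aux.prod_Ioi_swap (fun _ j => (1 + β * x (p j))⁻¹)]
        exact Finset.prod_congr rfl fun j _ => by
          rw [Finset.prod_const, Fin.card_Iio]
      have hyv : ∏ i, ∏ j ∈ Finset.Ioi i, (y (p j) - y (p i))
          = (∏ i, ∏ j ∈ Finset.Ioi i, (x (p j) - x (p i)))
              * ∏ i, ((1 + β * x (p i))⁻¹) ^ (r - 1 : ℕ) := by
        calc ∏ i, ∏ j ∈ Finset.Ioi i, (y (p j) - y (p i))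
            = ∏ i, ((∏ j ∈ Finset.Ioi i, (x (p j) - x (p i)))
                * ((∏ j ∈ Finset.Ioi i, (1 + β * x (p j))⁻¹)
                  * ((1 + β * x (p i))⁻¹) ^ (r - 1 - (i : ℕ)))) := by
              refine Finset.prod_congr rfl fun i _ => ?_
              rw [Finset.prod_congr rfl fun j (_ : j ∈ Finset.Ioi i) => hyd (p j) (p i),
                Finset.prod_mul_distrib, Finset.prod_mul_distrib, Finset.prod_const,
                Fin.card_Ioi]
          _ = (∏ i, ∏ j ∈ Finset.Ioi i, (x (p j) - x (p i)))
                * ((∏ i : Fin r, ∏ j ∈ Finset.Ioi i, (1 + β * x (p j))⁻¹)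
                  * ∏ i : Fin r, ((1 + β * x (p i))⁻¹) ^ (r - 1 - (i : ℕ))) := by
              rw [Finset.prod_mul_distrib, Finset.prod_mul_distrib]
          _ = (∏ i, ∏ j ∈ Finset.Ioi i, (x (p j) - x (p i)))
                * ((∏ i : Fin r, ((1 + β * x (p i))⁻¹) ^ (i : ℕ))
                  * ∏ i : Fin r, ((1 + β * x (p i))⁻¹) ^ (r - 1 - (i : ℕ))) := by
              rw [hsw]
          _ = (∏ i, ∏ j ∈ Finset.Ioi i, (x (p j) - x (p i)))
                * ∏ i, ((1 + β * x (p i))⁻¹) ^ (r - 1 : ℕ) := by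
              rw [← Finset.prod_mul_distrib]
              congr 1
              refine Finset.prod_congr rfl fun i _ => ?_
              rw [← pow_add]
              congr 1
              have h11 := i.isLt
              omega
      have hcan : (∏ i : Fin r, (1 + β * x (p i)) ^ (r - 1 : ℕ))
          * ∏ i : Fin r, ((1 + β * x (p i))⁻¹) ^ (r - 1 : ℕ) = 1 := by
        rw [← Finset.prod_mul_distrib]
        refine Finset.prod_eq_one fun i _ => ?_
        rw [← mul_pow, mul_inv_cancel₀ (hxu (p i)), one_pow]
      calc (∏ i, d2 i (p i)) * ∏ i, ∏ j ∈ Finset.Ioi i, (y (p j) - y (p i))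
          = ((∏ i, d1 i (p i)) * ∏ i : Fin r, (1 + β * x (p i)) ^ (r - 1 : ℕ))
              * ((∏ i, ∏ j ∈ Finset.Ioi i, (x (p j) - x (p i)))
                * ∏ i, ((1 + β * x (p i))⁻¹) ^ (r - 1 : ℕ)) := by
            rw [hyv, Finset.prod_congr rfl fun i (_ : i ∈ Finset.univ) => hd21 i,
              Finset.prod_mul_distrib (f := fun i => d1 i (p i))
                (g := fun i : Fin r => (1 + β * x (p i)) ^ (r - 1 : ℕ))]
        _ = (∏ i, d1 i (p i)) * ∏ i, ∏ j ∈ Finset.Ioi i, (x (p j) - x (p i)) := by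
            linear_combination ((∏ i, d1 i (p i))
              * ∏ i, ∏ j ∈ Finset.Ioi i, (x (p j) - x (p i))) * hcan
  constructor
  · rw [hQ, hdet1]
    exact Finset.sum_congr rfl fun p _ => term1 p
  · rw [hQ, hdet2]
    exact Finset.sum_congr rfl fun p _ => (term1 p).trans (term2 p).symm
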